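/- arXiv:2009.05550 — 3 statements merged into one kernel-verified Lean document; each statement's English description precedes it below -/
import Mathlib

section
/- Let n ≥ 3, let γ, α be real numbers, and let i be an index with 1 ≤ i ≤ n − 2 (0-based indexing). Let D = D(γ, i) be the n×n real matrix equal to the identity matrix except in row i, where its entries are 1 − γ in column i − 1, −1 in column i, and 1 + γ in column i + 1, and let F be the n×n matrix whose only nonzero entry is −α in position (i, i). Let M be the 2n×2n block matrix [[D, F], [0, Dᵀ]] and J the standard symplectic matrix [[0, I], [−I, 0]]. Then Mᵀ·J·M = J; that is, the derivative of a ball-to-ball collision map is a symplectic matrix. -/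
open Matrix

/-- The derivative of a ball-to-ball collision map is a symplectic matrix. -/
theorem ball_collision_derivative_symplectic (n : ℕ) (hn : 3 ≤ n) (γ α : ℝ)
    (i : ℕ) (hi1 : 1 ≤ i) (hi2 : i ≤ n - 2)
    (D F : Matrix (Fin n) (Fin n) ℝ)
    (hD : D = Matrix.of fun (j k : Fin n) =>
      if (j : ℕ) = i then
        (if (k : ℕ) = i - 1 then 1 - γ
         else if (k : ℕ) = i then -1
         else if (k : ℕ) = i + 1 then 1 + γ
         else 0)
      else if j = k then 1 else 0)
    (hF : F = Matrix.of fun (j k : Fin n) =>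
      if (j : ℕ) = i ∧ (k : ℕ) = i then -α else 0)
    (M J : Matrix (Fin n ⊕ Fin n) (Fin n ⊕ Fin n) ℝ)
    (hM : M = Matrix.fromBlocks D F 0 Dᵀ)
    (hJ : J = Matrix.fromBlocks 0 1 (-1) 0) :
    Mᵀ * J * M = J := by
  have hin : i < n := by omega
  have hi0n : i - 1 < n := by omega
  have hi2n : i + 1 < n := by omega
  set i0 : Fin n := ⟨i - 1, hi0n⟩ with hi0def
  set i1 : Fin n := ⟨i, hin⟩ with hi1def
  set i2 : Fin n := ⟨i + 1, hi2n⟩ with hi2def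
  -- Key fact 1 : D * D = 1
  have hDD : D * D = 1 := by
    subst hD
    ext j k
    rw [Matrix.mul_apply]
    by_cases hj : (j : ℕ) = i
    · -- only m ∈ {i0, i1, i2} contribute
      refine ((Finset.sum_subset (Finset.subset_univ ({i0, i1, i2} : Finset (Fin n)))
        ?_).symm.trans ?_)
      · intro x _ hx
        simp only [Finset.mem_insert, Finset.mem_singleton, not_or] at hx
        obtain ⟨h0, h1, h2⟩ := hx
        have e0 : (x : ℕ) ≠ i - 1 := fun h => h0 (Fin.ext h)
        have e1 : (x : ℕ) ≠ i := fun h => h1 (Fin.ext h)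
        have e2 : (x : ℕ) ≠ i + 1 := fun h => h2 (Fin.ext h)
        simp [hj, e0, e1, e2]
      have d01 : i0 ≠ i1 := by
        simp only [hi0def, hi1def, ne_eq, Fin.mk.injEq]; omega
      have d02 : i0 ≠ i2 := by
        simp only [hi0def, hi2def, ne_eq, Fin.mk.injEq]; omega
      have d12 : i1 ≠ i2 := by
        simp only [hi1def, hi2def, ne_eq, Fin.mk.injEq]; omega
      rw [Finset.sum_insert (by simp [d01, d02]),
          Finset.sum_insert (by simp [d12]), Finset.sum_singleton]
      have c0 : (i0 : ℕ) = i - 1 := rfl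
      have c1 : (i1 : ℕ) = i := rfl
      have c2 : (i2 : ℕ) = i + 1 := rfl
      have E0 : i0 = k ↔ (k : ℕ) = i - 1 := by
        rw [Fin.ext_iff, c0, eq_comm]
      have E2 : i2 = k ↔ (k : ℕ) = i + 1 := by
        rw [Fin.ext_iff, c2, eq_comm]
      have EJ : j = k ↔ (k : ℕ) = i := by
        rw [Fin.ext_iff, hj, eq_comm]
      have n01 : (i : ℕ) ≠ i - 1 := by omega
      have n0 : (i - 1 : ℕ) ≠ i := by omega
      have n20 : (i + 1 : ℕ) ≠ i - 1 := by omega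
      have n2 : (i + 1 : ℕ) ≠ i := by omega
      simp only [Matrix.of_apply, Matrix.one_apply, hj, c0, c1, c2, E0, E2, EJ,
        n01, n0, n20, n2, if_true, if_false, ite_true, ite_false, ne_eq,
        not_false_eq_true]
      split_ifs <;> first | omega | ring1
    · -- row j is an identity row
      simp only [Matrix.of_apply, hj, if_false, ite_mul, one_mul, zero_mul]
      rw [Finset.sum_ite_eq]
      simp [hj, Matrix.one_apply]
  -- Key fact 2 : D * F is symmetric (explicitly computed)
  have hDFval : D * F = Matrix.of fun (j k : Fin n) =>
      if (j : ℕ) = i ∧ (k : ℕ) = i then α else 0 := by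
    subst hD hF
    ext j k
    rw [Matrix.mul_apply]
    rw [Finset.sum_eq_single i1]
    · by_cases hj : (j : ℕ) = i
      · by_cases hk : (k : ℕ) = i
        · have n01 : ¬ (i : ℕ) = i - 1 := by omega
          simp [hj, hk, n01, show (i1 : ℕ) = i from rfl]
          try norm_num
        · simp [hj, hk]
      · have : ¬ j = i1 := fun h => hj (by rw [h])
        simp [hj, this]
    · intro b _ hb
      have : (b : ℕ) ≠ i := fun h => hb (Fin.ext h)
      simp [this]
    · intro h
      exact absurd (Finset.mem_univ i1) h
  have hFD : Fᵀ * Dᵀ = D * F := by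
    rw [← Matrix.transpose_mul, hDFval]
    ext j k
    simp [Matrix.transpose_apply, and_comm]
  have hDD' : Dᵀ * Dᵀ = 1 := by
    rw [← Matrix.transpose_mul, hDD, Matrix.transpose_one]
  subst hM hJ
  rw [Matrix.fromBlocks_transpose, Matrix.transpose_transpose,
      Matrix.fromBlocks_multiply, Matrix.fromBlocks_multiply]
  simp [hDD, hDD', hFD, Matrix.mul_neg, Matrix.neg_mul]
end

section
/- Let n ≥ 3, let γ, α be real numbers, and let i be an index with 1 ≤ i ≤ n − 2 (0-based indexing). Let D = D(γ, i) be the n×n real matrix equal to the identity matrix except in row i, where its entries are 1 − γ in column i − 1, −1 in column i, and 1 + γ in column i + 1, and let F be the n×n matrix whose only nonzero entry is −α in position (i, i). Then for all vectors ξ, η ∈ ℝⁿ, the quadratic form Q(ξ, η) = ⟨ξ, η⟩ satisfies Q(D·ξ + F·η, Dᵀ·η) = Q(ξ, η) + α·η_i². In particular, if α ≥ 0 then the derivative of the ball-to-ball collision map is Q-monotone, and it is strictly Q-increasing on every vector with η_i ≠ 0 when α > 0. -/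
open Matrix

set_option maxHeartbeats 1000000

/-- The derivative of a ball-to-ball collision map changes the quadratic form `Q`
by `α η_i²`; in particular it is Q-monotone for `α ≥ 0` and strictly Q-increasing
on vectors with `η_i ≠ 0` when `α > 0`. -/
theorem ball_collision_Q_monotone (n : ℕ) (hn : 3 ≤ n) (γ α : ℝ)
    (i : ℕ) (hi1 : 1 ≤ i) (hi2 : i ≤ n - 2)
    (D F : Matrix (Fin n) (Fin n) ℝ)
    (hD : D = Matrix.of fun (j k : Fin n) =>
      if (j : ℕ) = i then
        (if (k : ℕ) = i - 1 then 1 - γ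
         else if (k : ℕ) = i then -1
         else if (k : ℕ) = i + 1 then 1 + γ
         else 0)
      else if j = k then 1 else 0)
    (hF : F = Matrix.of fun (j k : Fin n) =>
      if (j : ℕ) = i ∧ (k : ℕ) = i then -α else 0)
    (ξ η : Fin n → ℝ) :
    (D.mulVec ξ + F.mulVec η) ⬝ᵥ (Dᵀ.mulVec η)
        = ξ ⬝ᵥ η + α * (η ⟨i, by omega⟩) ^ 2 ∧
    (0 ≤ α → ξ ⬝ᵥ η ≤ (D.mulVec ξ + F.mulVec η) ⬝ᵥ (Dᵀ.mulVec η)) ∧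
    (0 < α → η ⟨i, by omega⟩ ≠ 0 →
        ξ ⬝ᵥ η < (D.mulVec ξ + F.mulVec η) ⬝ᵥ (Dᵀ.mulVec η)) := by
  have hin : i < n := by omega
  set i₀ : Fin n := ⟨i, by omega⟩ with hi₀
  set iL : Fin n := ⟨i - 1, by omega⟩ with hiL
  set iR : Fin n := ⟨i + 1, by omega⟩ with hiR
  obtain ⟨u, hu⟩ : ∃ u : Fin n → ℝ, u = fun k =>
      if k = iL then 1 - γ else if k = i₀ then -2 else if k = iR then 1 + γ else 0 :=
    ⟨_, rfl⟩
  obtain ⟨M, hM⟩ : ∃ M : Matrix (Fin n) (Fin n) ℝ,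
      M = Matrix.of (fun j k => if j = i₀ then u k else 0) := ⟨_, rfl⟩
  -- rewrite D as 1 + M
  have hDe : D = 1 + M := by
    subst hD
    ext j k
    simp only [Matrix.add_apply, Matrix.one_apply, Matrix.of_apply, hM, hu]
    have ej : ((j : ℕ) = i) ↔ j = i₀ := by rw [Fin.ext_iff]
    have e1 : ((k : ℕ) = i - 1) ↔ k = iL := by rw [Fin.ext_iff]
    have e2 : ((k : ℕ) = i) ↔ k = i₀ := by rw [Fin.ext_iff]
    have e3 : ((k : ℕ) = i + 1) ↔ k = iR := by rw [Fin.ext_iff]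
    simp only [ej, e1, e2, e3]
    by_cases hj : j = i₀
    · subst hj
      simp only [if_pos rfl]
      by_cases h2 : k = i₀
      · have h1 : ¬ k = iL := by
          subst h2; simp only [hiL, hi₀, Fin.ext_iff]; omega
        subst h2
        simp [h1]
        norm_num
      · have h2' : ¬ i₀ = k := fun h => h2 h.symm
        simp [h2, h2']
    · simp [hj]
  have hui₀ : u i₀ = -2 := by
    have h1 : ¬ (i₀ = iL) := by simp only [hiL, hi₀, Fin.ext_iff]; omega
    simp [hu, h1]
  -- M * M = -(M + M)
  have hMM : M * M = -(M + M) := by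
    ext j k
    simp only [Matrix.mul_apply, hM, Matrix.of_apply, Matrix.neg_apply, Matrix.add_apply,
      ite_mul, mul_ite, zero_mul, mul_zero]
    by_cases hj : j = i₀
    · simp [hj, Finset.sum_ite_eq', hui₀]; ring
    · simp [hj]
  have hDD : D * D = 1 := by
    rw [hDe, add_mul, mul_add, mul_add, hMM]
    simp only [one_mul, mul_one]
    abel
  -- first summand of the quadratic form
  have key1 : (D.mulVec ξ) ⬝ᵥ (Dᵀ.mulVec η) = ξ ⬝ᵥ η := by
    rw [dotProduct_comm, dotProduct_mulVec, Matrix.vecMul_mulVec, Matrix.transpose_transpose,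
      hDD, Matrix.vecMul_one, dotProduct_comm]
  -- (Dᵀ η) at index i₀ is -η i₀
  have hDTi : (Dᵀ.mulVec η) i₀ = -η i₀ := by
    rw [hDe]
    simp only [Matrix.mulVec, dotProduct, Matrix.transpose_apply, Matrix.add_apply,
      Matrix.one_apply, hM, Matrix.of_apply]
    have hterm : ∀ k : Fin n, ((if k = i₀ then (1:ℝ) else 0) + if k = i₀ then u i₀ else 0) * η k
        = if k = i₀ then (1 + u i₀) * η k else 0 := by
      intro k; by_cases hk : k = i₀ <;> simp [hk]
    rw [Finset.sum_congr rfl (fun k _ => hterm k)]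
    rw [Finset.sum_ite_eq' Finset.univ i₀ (fun k => (1 + u i₀) * η k)]
    simp [hui₀]
    ring
  -- F η
  have hFv : F.mulVec η = fun j => if j = i₀ then -α * η i₀ else 0 := by
    subst hF
    ext j
    simp only [Matrix.mulVec, dotProduct, Matrix.of_apply]
    have ej : ∀ k : Fin n, (((j : ℕ) = i ∧ (k : ℕ) = i) ↔ (j = i₀ ∧ k = i₀)) := by
      intro k; rw [Fin.ext_iff, Fin.ext_iff]
    simp only [ej]
    by_cases hj : j = i₀
    · simp only [hj, true_and, if_pos, ite_mul, zero_mul, Finset.sum_ite_eq',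
        Finset.mem_univ, if_pos]
    · simp [hj]
  have key2 : (F.mulVec η) ⬝ᵥ (Dᵀ.mulVec η) = α * (η i₀) ^ 2 := by
    rw [hFv]
    simp only [dotProduct, ite_mul, zero_mul, Finset.sum_ite_eq', Finset.mem_univ,
      if_pos, hDTi]
    ring
  have main : (D.mulVec ξ + F.mulVec η) ⬝ᵥ (Dᵀ.mulVec η) = ξ ⬝ᵥ η + α * (η i₀) ^ 2 := by
    rw [add_dotProduct, key1, key2]
  refine ⟨main, ?_, ?_⟩
  · intro hα
    rw [main]
    nlinarith [sq_nonneg (η i₀)]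
  · intro hα hη
    rw [main]
    have : 0 < α * (η i₀) ^ 2 := by positivity
    linarith
end

section
/- Let n ≥ 3 and let M₁, …, M_k be 2n×2n real block matrices, each of which is either of floor type [[I, 0], [B, I]] with B having a single nonnegative entry β_j ≥ 0 in position (0,0), or of ball type [[D(γ_j, i_j), F_j], [0, D(γ_j, i_j)ᵀ]] where 1 ≤ i_j ≤ n − 2, D(γ, i) is the identity except row i has entries 1 − γ, −1, 1 + γ in columns i−1, i, i+1, and F_j has a single entry −α_j with α_j ≥ 0 in position (i_j, i_j). Then the product M_k ⋯ M₁ is Q-monotone: writing M_k ⋯ M₁ (ξ, η) = (ξ', η'), one has ⟨ξ', η'⟩ ≥ ⟨ξ, η⟩ for all (ξ, η) ∈ ℝⁿ × ℝⁿ. Consequently the closed cone {(ξ, η) : ⟨ξ, η⟩ ≥ 0} is invariant under any such product. -/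
open Matrix

/-- A floor-type collision derivative: `[[I, 0], [B, I]]` with a single
nonnegative entry `β` of `B` in position `(0,0)`. -/
def IsFloorType (n : ℕ) (M : Matrix (Fin n ⊕ Fin n) (Fin n ⊕ Fin n) ℝ) : Prop :=
  ∃ β : ℝ, 0 ≤ β ∧
    M = Matrix.fromBlocks 1 0
      (Matrix.of fun (j k : Fin n) =>
        if (j : ℕ) = 0 ∧ (k : ℕ) = 0 then β else 0) 1

/-- A ball-type collision derivative: `[[D(γ,i), F], [0, D(γ,i)ᵀ]]` with `F`
having a single entry `−α ≤ 0` in position `(i,i)`. -/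
def IsBallType (n : ℕ) (M : Matrix (Fin n ⊕ Fin n) (Fin n ⊕ Fin n) ℝ) : Prop :=
  ∃ (γ α : ℝ) (i : ℕ), 1 ≤ i ∧ i ≤ n - 2 ∧ 0 ≤ α ∧
    M = Matrix.fromBlocks
      (Matrix.of fun (j k : Fin n) =>
        if (j : ℕ) = i then
          (if (k : ℕ) = i - 1 then 1 - γ
           else if (k : ℕ) = i then -1
           else if (k : ℕ) = i + 1 then 1 + γ
           else 0)
        else if j = k then 1 else 0)
      (Matrix.of fun (j k : Fin n) =>
        if (j : ℕ) = i ∧ (k : ℕ) = i then -α else 0)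
      0
      (Matrix.of fun (j k : Fin n) =>
        if (j : ℕ) = i then
          (if (k : ℕ) = i - 1 then 1 - γ
           else if (k : ℕ) = i then -1
           else if (k : ℕ) = i + 1 then 1 + γ
           else 0)
        else if j = k then 1 else 0)ᵀ

/-- The `D(γ,i)` block of a ball-type collision derivative. -/
def Dmat (n : ℕ) (γ : ℝ) (i : ℕ) : Matrix (Fin n) (Fin n) ℝ :=
  Matrix.of fun (j k : Fin n) =>
    if (j : ℕ) = i then
      (if (k : ℕ) = i - 1 then 1 - γ
       else if (k : ℕ) = i then -1
       else if (k : ℕ) = i + 1 then 1 + γ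
       else 0)
    else if j = k then 1 else 0

theorem Dmat_sq (n : ℕ) (γ : ℝ) (i : ℕ) (h1 : 1 ≤ i) (h2 : i + 1 < n) :
    Dmat n γ i * Dmat n γ i = 1 := by
  have hilt : i < n := by omega
  set a : Fin n := ⟨i - 1, by omega⟩ with ha
  set b : Fin n := ⟨i, hilt⟩ with hb
  set c : Fin n := ⟨i + 1, h2⟩ with hc
  ext j k
  rw [mul_apply]
  by_cases hj : (j : ℕ) = i
  · have hjb : j = b := by simp [Fin.ext_iff, hb, hj]
    have key : ∀ l : Fin n, Dmat n γ i j l =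
        (if a = l then 1 - γ else 0) + (if b = l then -1 else 0) +
        (if c = l then 1 + γ else 0) := by
      intro l
      simp only [Dmat, of_apply, hj, if_true, ha, hb, hc, Fin.ext_iff]
      split_ifs <;> first | ring1 | (exfalso; omega)
    calc (∑ l, Dmat n γ i j l * Dmat n γ i l k)
        = ∑ l, ((if a = l then (1-γ) * Dmat n γ i l k else 0) +
            (if b = l then (-1) * Dmat n γ i l k else 0) +
            (if c = l then (1+γ) * Dmat n γ i l k else 0)) := by
          refine Finset.sum_congr rfl fun l _ => ?_
          rw [key l]; split_ifs <;> ring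
      _ = (1-γ) * Dmat n γ i a k + (-1) * Dmat n γ i b k + (1+γ) * Dmat n γ i c k := by
          simp [Finset.sum_add_distrib, Finset.sum_ite_eq]
      _ = (1 : Matrix (Fin n) (Fin n) ℝ) j k := by
          simp only [Dmat, of_apply, one_apply, hjb, hb, ha, hc]
          simp only [Fin.ext_iff]
          split_ifs <;> first | ring1 | (exfalso; omega)
  · have : ∀ l : Fin n, Dmat n γ i j l = if j = l then 1 else 0 := by
      intro l; simp [Dmat, hj]
    simp only [this, ite_mul, one_mul, zero_mul, Finset.sum_ite_eq, Finset.mem_univ, if_true]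
    simp [Dmat, one_apply, hj]

/-- Q-monotonicity of a single block matrix. -/
def QMono (n : ℕ) (M : Matrix (Fin n ⊕ Fin n) (Fin n ⊕ Fin n) ℝ) : Prop :=
  ∀ ξ η : Fin n → ℝ,
    ξ ⬝ᵥ η ≤ (fun i => M.mulVec (Sum.elim ξ η) (Sum.inl i)) ⬝ᵥ
              (fun i => M.mulVec (Sum.elim ξ η) (Sum.inr i))

theorem QMono_one (n : ℕ) : QMono n 1 := by
  intro ξ η
  simp only [one_mulVec]
  have h1 : (fun i => Sum.elim ξ η (Sum.inl i)) = ξ := rfl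
  have h2 : (fun i => Sum.elim ξ η (Sum.inr i)) = η := rfl
  rw [h1, h2]

theorem QMono_mul (n : ℕ) (M P : Matrix (Fin n ⊕ Fin n) (Fin n ⊕ Fin n) ℝ)
    (hM : QMono n M) (hP : QMono n P) : QMono n (M * P) := by
  intro ξ η
  set w := P.mulVec (Sum.elim ξ η) with hw
  have hsum : Sum.elim (fun i => w (Sum.inl i)) (fun i => w (Sum.inr i)) = w := by
    funext x; cases x <;> rfl
  have h1 := hP ξ η
  have h2 := hM (fun i => w (Sum.inl i)) (fun i => w (Sum.inr i))
  rw [hsum] at h2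
  have hmv : (M * P).mulVec (Sum.elim ξ η) = M.mulVec w := by
    rw [hw, ← mulVec_mulVec]
  rw [hmv]
  exact le_trans h1 h2

theorem QMono_floor (n : ℕ) (M : Matrix (Fin n ⊕ Fin n) (Fin n ⊕ Fin n) ℝ)
    (hn : 3 ≤ n) (h : IsFloorType n M) : QMono n M := by
  obtain ⟨β, hβ, rfl⟩ := h
  intro ξ η
  rw [fromBlocks_mulVec]
  have hl : (Sum.elim ξ η) ∘ Sum.inl = ξ := rfl
  have hr : (Sum.elim ξ η) ∘ Sum.inr = η := rfl
  rw [hl, hr]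
  set B : Matrix (Fin n) (Fin n) ℝ :=
    Matrix.of fun (j k : Fin n) => if (j : ℕ) = 0 ∧ (k : ℕ) = 0 then β else 0 with hB
  have e1 : (fun i => Sum.elim ((1 : Matrix (Fin n) (Fin n) ℝ) *ᵥ ξ + (0 : Matrix (Fin n) (Fin n) ℝ) *ᵥ η)
      (B *ᵥ ξ + (1 : Matrix (Fin n) (Fin n) ℝ) *ᵥ η) (Sum.inl i)) = ξ := by
    funext i; simp
  have e2 : (fun i => Sum.elim ((1 : Matrix (Fin n) (Fin n) ℝ) *ᵥ ξ + (0 : Matrix (Fin n) (Fin n) ℝ) *ᵥ η)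
      (B *ᵥ ξ + (1 : Matrix (Fin n) (Fin n) ℝ) *ᵥ η) (Sum.inr i)) = B *ᵥ ξ + η := by
    funext i; simp
  rw [e1, e2, dotProduct_add]
  have hpos : 0 ≤ ξ ⬝ᵥ (B *ᵥ ξ) := by
    unfold dotProduct mulVec
    refine Finset.sum_nonneg fun j _ => ?_
    by_cases hj : (j : ℕ) = 0
    · have : ∀ k : Fin n, B j k * ξ k = if j = k then β * ξ k else 0 := by
        intro k
        simp only [hB, of_apply, Fin.ext_iff, hj, true_and, eq_self_iff_true]
        by_cases hk : (k : ℕ) = 0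
        · rw [if_pos hk, if_pos (by omega)]
        · rw [if_neg hk, if_neg (by omega)]; ring
      simp only [dotProduct, this, Finset.sum_ite_eq, Finset.mem_univ, if_true]
      nlinarith [mul_self_nonneg (ξ j)]
    · have : ∀ k : Fin n, B j k * ξ k = 0 := by
        intro k; simp [hB, hj]
      simp [dotProduct, this]
  linarith

theorem QMono_ball (n : ℕ) (M : Matrix (Fin n ⊕ Fin n) (Fin n ⊕ Fin n) ℝ)
    (hn : 3 ≤ n) (h : IsBallType n M) : QMono n M := by
  obtain ⟨γ, α, i, hi1, hi2, hα, rfl⟩ := h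
  have h2 : i + 1 < n := by omega
  have hid : (Matrix.of fun (j k : Fin n) =>
      if (j : ℕ) = i then
        (if (k : ℕ) = i - 1 then 1 - γ
         else if (k : ℕ) = i then -1
         else if (k : ℕ) = i + 1 then 1 + γ
         else 0)
      else if j = k then 1 else (0 : ℝ)) = Dmat n γ i := rfl
  rw [hid]
  have hDD := Dmat_sq n γ i hi1 h2
  set b : Fin n := ⟨i, by omega⟩ with hb
  set D : Matrix (Fin n) (Fin n) ℝ := Dmat n γ i with hD
  set F : Matrix (Fin n) (Fin n) ℝ :=
    Matrix.of fun (j k : Fin n) => if (j : ℕ) = i ∧ (k : ℕ) = i then -α else 0 with hF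
  intro ξ η
  rw [fromBlocks_mulVec]
  have hl : (Sum.elim ξ η) ∘ Sum.inl = ξ := rfl
  have hr : (Sum.elim ξ η) ∘ Sum.inr = η := rfl
  rw [hl, hr]
  have e1 : (fun j => Sum.elim (D *ᵥ ξ + F *ᵥ η)
      ((0 : Matrix (Fin n) (Fin n) ℝ) *ᵥ ξ + Dᵀ *ᵥ η) (Sum.inl j)) = D *ᵥ ξ + F *ᵥ η := by
    funext j; simp
  have e2 : (fun j => Sum.elim (D *ᵥ ξ + F *ᵥ η)
      ((0 : Matrix (Fin n) (Fin n) ℝ) *ᵥ ξ + Dᵀ *ᵥ η) (Sum.inr j)) = Dᵀ *ᵥ η := by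
    funext j; simp
  rw [e1, e2, add_dotProduct]
  have hterm1 : (D *ᵥ ξ) ⬝ᵥ (Dᵀ *ᵥ η) = ξ ⬝ᵥ η := by
    rw [dotProduct_mulVec, vecMul_transpose, mulVec_mulVec, hD, hDD, one_mulVec]
  have hFv : F *ᵥ η = fun j => if j = b then -α * η b else 0 := by
    funext j
    by_cases hj : (j : ℕ) = i
    · have hjb : j = b := by simp [Fin.ext_iff, hb, hj]
      have hk : ∀ k : Fin n, F j k * η k = if b = k then -α * η k else 0 := by
        intro k
        simp only [hF, of_apply, hj, true_and, hb, Fin.ext_iff]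
        by_cases hki : (k : ℕ) = i
        · rw [if_pos hki, if_pos (by omega)]
        · rw [if_neg hki, if_neg (by omega)]; ring
      simp only [mulVec, dotProduct, hk, Finset.sum_ite_eq, Finset.mem_univ, if_true,
        if_pos hjb]
    · have hjb : ¬ j = b := by simp [Fin.ext_iff, hb, hj]
      have hk : ∀ k : Fin n, F j k * η k = 0 := by
        intro k; simp [hF, hj]
      simp [mulVec, dotProduct, hk, hjb]
  have hterm2 : (F *ᵥ η) ⬝ᵥ (Dᵀ *ᵥ η) = α * (η b * η b) := by
    have hDb : (Dᵀ *ᵥ η) b = -η b := by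
      have hDbk : ∀ k : Fin n, Dᵀ b k = if b = k then (-1 : ℝ) else 0 := by
        intro k
        simp only [hD, Dmat, transpose_apply, of_apply, hb, Fin.ext_iff]
        split_ifs <;> first | ring1 | (exfalso; omega)
      have hk : ∀ k : Fin n, Dᵀ b k * η k = if b = k then -η k else 0 := by
        intro k; rw [hDbk k]
        by_cases hkb : b = k
        · rw [if_pos hkb, if_pos hkb]; ring
        · rw [if_neg hkb, if_neg hkb]; ring
      simp only [mulVec, dotProduct, hk, Finset.sum_ite_eq, Finset.mem_univ, if_true]
    rw [hFv]
    have : ∀ j : Fin n, (if j = b then -α * η b else 0) * (Dᵀ *ᵥ η) j =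
        if b = j then -α * η b * (Dᵀ *ᵥ η) j else 0 := by
      intro j; by_cases hj : j = b
      · rw [if_pos hj, if_pos hj.symm]
      · rw [if_neg hj, if_neg (fun h => hj h.symm), zero_mul]
    simp only [dotProduct, this, Finset.sum_ite_eq, Finset.mem_univ, if_true, hDb]
    ring
  rw [hterm1, hterm2]
  nlinarith [mul_self_nonneg (η b)]

theorem QMono_prod (n : ℕ) (hn : 3 ≤ n)
    (Ms : List (Matrix (Fin n ⊕ Fin n) (Fin n ⊕ Fin n) ℝ))
    (hMs : ∀ M ∈ Ms, IsFloorType n M ∨ IsBallType n M) : QMono n Ms.prod := by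
  induction Ms with
  | nil => simpa using QMono_one n
  | cons M rest ih =>
    rw [List.prod_cons]
    exact QMono_mul n M rest.prod
      ((hMs M List.mem_cons_self).elim (QMono_floor n M hn) (QMono_ball n M hn))
      (ih fun P hP => hMs P (List.mem_cons_of_mem M hP))

/-- Any finite product of floor-type and ball-type collision derivatives is
Q-monotone, hence the closed cone `{(ξ, η) : ⟨ξ, η⟩ ≥ 0}` is invariant. -/
theorem product_of_collision_derivatives_Q_monotone
    (n : ℕ) (hn : 3 ≤ n)
    (Ms : List (Matrix (Fin n ⊕ Fin n) (Fin n ⊕ Fin n) ℝ))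
    (hMs : ∀ M ∈ Ms, IsFloorType n M ∨ IsBallType n M)
    (ξ η : Fin n → ℝ) :
    ξ ⬝ᵥ η ≤ (fun i => Ms.prod.mulVec (Sum.elim ξ η) (Sum.inl i)) ⬝ᵥ
              (fun i => Ms.prod.mulVec (Sum.elim ξ η) (Sum.inr i)) ∧
    (0 ≤ ξ ⬝ᵥ η →
      0 ≤ (fun i => Ms.prod.mulVec (Sum.elim ξ η) (Sum.inl i)) ⬝ᵥ
          (fun i => Ms.prod.mulVec (Sum.elim ξ η) (Sum.inr i))) := by
  have h := QMono_prod n hn Ms hMs ξ η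
  exact ⟨h, fun h0 => le_trans h0 h⟩
end
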